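/- The map h is chaotic on [−1/2, 1]: there exists δ > 0 such that for every point x ∈ [−1/2, 1] and every nonempty open set V ⊆ [−1/2, 1] there is a point y ∈ V with limsup_{n→∞} |hⁿ(x) − hⁿ(y)| ≥ δ and liminf_{n→∞} |hⁿ(x) − hⁿ(y)| = 0. -/

import Mathlib

open Filter

/-- The map `h : [-1/2,1] → [-1/2,1]` given by `h(x) = -x` on `[-1/2,0]` and
`h(x) = T(x) = 1 - |2x - 1|` on `[0,1]`. -/
noncomputable def hMap (x : ℝ) : ℝ :=
  if x ≤ 0 then -x else 1 - |2 * x - 1|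

/-- distance to the nearest even integer -/
noncomputable def phi (t : ℝ) : ℝ := |t - 2 * round (t / 2)|

lemma two_abs_half (t : ℝ) (c : ℝ) : |t - 2 * c| = 2 * |t/2 - c| := by
  rw [show t - 2*c = 2 * (t/2 - c) by ring, abs_mul]
  norm_num

lemma phi_nonneg (t : ℝ) : 0 ≤ phi t := abs_nonneg _

lemma phi_le_one (t : ℝ) : phi t ≤ 1 := by
  have h := abs_sub_round (t / 2)
  rw [phi, two_abs_half]; linarith

lemma round_eq_of_abs_sub_lt_half {x : ℝ} {k : ℤ} (h : |x - k| < 1/2) : round x = k := by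
  have h1 := abs_sub_round x
  have h2 : |(round x : ℝ) - k| < 1 := by
    calc |(round x : ℝ) - k| ≤ |(round x : ℝ) - x| + |x - k| := abs_sub_le _ _ _
    _ < 1 := by rw [abs_sub_comm]; linarith
  have h3 : (|round x - k| : ℤ) < 1 := by
    have := h2
    rw [show ((round x : ℝ) - k) = ((round x - k : ℤ) : ℝ) by push_cast; ring, ← Int.cast_abs] at this
    exact_mod_cast this
  rw [abs_lt] at h3; omega

lemma phi_le (t : ℝ) (k : ℤ) : phi t ≤ |t - 2 * k| := by
  rcases le_or_gt (1/2) (|t/2 - k|) with h | h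
  · have h1 := phi_le_one t
    rw [two_abs_half]; linarith
  · rw [phi, round_eq_of_abs_sub_lt_half h]

lemma phi_le_abs (t : ℝ) : phi t ≤ |t| := by simpa using phi_le t 0

lemma phi_add_int_mul_two (t : ℝ) (k : ℤ) : phi (t + 2 * k) = phi t := by
  have : (t + 2 * k) / 2 = t / 2 + k := by ring
  rw [phi, this, round_add_intCast, phi]
  push_cast; ring_nf

lemma phi_neg (t : ℝ) : phi (-t) = phi t := by
  have h : ∀ s : ℝ, phi (-s) ≤ phi s := by
    intro s
    calc phi (-s) ≤ |(-s) - 2 * ((-(round (s/2)) : ℤ) : ℝ)| := phi_le _ _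
    _ = |s - 2 * round (s/2)| := by push_cast; rw [← abs_neg]; ring_nf
    _ = phi s := rfl
  refine le_antisymm (h t) ?_
  simpa using h (-t)

lemma phi_add_le (s t : ℝ) : phi (s + t) ≤ phi s + phi t := by
  calc phi (s + t) ≤ |(s+t) - 2*(((round (s/2) + round (t/2) : ℤ)) : ℝ)| := phi_le _ _
  _ ≤ |s - 2 * round (s/2)| + |t - 2 * round (t/2)| := by
        push_cast
        rw [show s + t - 2*((round (s/2) : ℝ) + round (t/2)) = (s - 2*round (s/2)) + (t - 2*round (t/2)) by ring]
        exact abs_add_le _ _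
  _ = phi s + phi t := rfl

lemma abs_phi_sub_phi (s t : ℝ) : |phi s - phi t| ≤ phi (s - t) := by
  rw [abs_sub_le_iff]
  constructor
  · have := phi_add_le t (s - t); simp at this; linarith
  · have := phi_add_le s (t - s)
    have h2 : phi (t - s) = phi (s - t) := by rw [← phi_neg (t-s)]; ring_nf
    simp at this; linarith

lemma phi_eq_self {t : ℝ} (h0 : 0 ≤ t) (h1 : t ≤ 1) : phi t = t := by
  refine le_antisymm (by simpa [abs_of_nonneg h0] using phi_le t 0) ?_
  rw [phi]
  set k := round (t/2) with hk
  rcases le_or_gt k 0 with hk0 | hk0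
  · have : (k:ℝ) ≤ 0 := by exact_mod_cast hk0
    rw [abs_of_nonneg (by linarith)]; linarith
  · have : (1:ℝ) ≤ (k:ℝ) := by exact_mod_cast hk0
    rw [abs_of_nonpos (by linarith)]; linarith

lemma phi_abs (t : ℝ) : phi |t| = phi t := by
  rcases abs_cases t with ⟨h, _⟩ | ⟨h, _⟩ <;> rw [h]
  exact phi_neg t

lemma phi_two_phi (t : ℝ) : phi (2 * phi t) = phi (2 * t) := by
  have h1 : (2 : ℝ) * phi t = |2 * t - 2 * (2 * round (t/2))| := by
    rw [phi, show |2*t - 2*(2*round (t/2))| = 2 * |(2*t)/2 - 2*round (t/2)| from two_abs_half _ _]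
    norm_num
  rw [h1, phi_abs, show 2*t - 2*(2*(round (t/2):ℝ)) = 2*t + 2*((-(2 * round (t/2)) : ℤ) : ℝ) by push_cast; ring]
  exact phi_add_int_mul_two _ _

lemma hMap_of_mem {z : ℝ} (h0 : 0 ≤ z) (_h1 : z ≤ 1) : hMap z = 1 - |2 * z - 1| := by
  rw [hMap]
  split_ifs with h
  · have : z = 0 := le_antisymm h h0
    simp [this]
  · rfl

lemma tent_eq_phi {w : ℝ} (h0 : 0 ≤ w) (h1 : w ≤ 1) : 1 - |2 * w - 1| = phi (2 * w) := by
  rcases le_or_gt (2 * w) 1 with h | h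
  · rw [phi_eq_self (by linarith) h, abs_of_nonpos (by linarith)]; ring
  · have e1 : phi (2 * w) = phi (2 - 2 * w) := by
      rw [← phi_neg (2 - 2*w), show -(2 - 2*w) = 2*w + 2*((-1:ℤ):ℝ) by push_cast; ring,
        phi_add_int_mul_two]
    rw [e1, phi_eq_self (by linarith) (by linarith), abs_of_nonneg (by linarith)]; ring

lemma hMap_iterate_eq_phi {z : ℝ} (h0 : 0 ≤ z) (h1 : z ≤ 1) (n : ℕ) :
    hMap^[n] z = phi (2 ^ n * z) := by
  induction n with
  | zero => simp [phi_eq_self h0 h1]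
  | succ n ih =>
    rw [Function.iterate_succ_apply', ih]
    have hp0 : 0 ≤ phi (2^n * z) := phi_nonneg _
    have hp1 : phi (2^n * z) ≤ 1 := phi_le_one _
    rw [hMap_of_mem hp0 hp1, tent_eq_phi hp0 hp1, phi_two_phi,
      show 2 * (2^n * z) = 2^(n+1) * z by ring]

lemma hMap_mem_Icc {x : ℝ} (h : x ∈ Set.Icc (-(1/2) : ℝ) 1) : hMap x ∈ Set.Icc (0:ℝ) 1 := by
  obtain ⟨h1, h2⟩ := h
  rw [hMap]
  split_ifs with h
  · constructor <;> [linarith; linarith]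
  · push_neg at h
    rcases abs_cases (2*x - 1) with ⟨he, _⟩ | ⟨he, _⟩ <;> rw [he] <;>
      constructor <;> linarith

/-! ### digit selection -/

noncomputable def qsel (θ : ℝ) (m : ℕ) : ℤ := (-⌊θ * 2^m⌋) % 2^(m+1)

lemma qsel_nonneg (θ : ℝ) (m : ℕ) : 0 ≤ qsel θ m :=
  Int.emod_nonneg _ (by positivity)

lemma qsel_lt (θ : ℝ) (m : ℕ) : qsel θ m < 2^(m+1) :=
  Int.emod_lt_of_pos _ (by positivity)

lemma one_half_pow (m : ℕ) : ((1:ℝ)/2)^m = 1/2^m := by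
  rw [div_pow, one_pow]

lemma phi_qsel (θ : ℝ) (m : ℕ) : phi (θ + qsel θ m / 2^m) ≤ (1/2)^m := by
  set F : ℤ := ⌊θ * 2^m⌋ with hF
  set c : ℤ := (-F) / 2^(m+1) with hc
  have hq : (qsel θ m : ℝ) = -F - 2^(m+1) * (c : ℝ) := by
    rw [qsel, ← hF, Int.emod_def, ← hc]; push_cast; ring
  have hpos : (0:ℝ) < 2^m := by positivity
  have key : θ + qsel θ m / 2^m = (θ - F/2^m) + 2 * ((-c : ℤ) : ℝ) := by
    rw [hq]; push_cast; field_simp; ring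
  rw [key, phi_add_int_mul_two]
  have hfl : (F : ℝ) ≤ θ * 2^m := Int.floor_le _
  have hfu : θ * 2^m < F + 1 := Int.lt_floor_add_one _
  have e : θ - F/2^m = (θ*2^m - F)/2^m := by field_simp
  have habs : |θ - F/2^m| ≤ (1/2)^m := by
    rw [e, one_half_pow, abs_div, abs_of_pos hpos, abs_of_nonneg (by linarith)]
    gcongr
    linarith
  calc phi (θ - F/2^m) ≤ |θ - F/2^m| := phi_le_abs _
  _ ≤ (1/2)^m := habs
/-! ### the time sequence -/

def ns (N k : ℕ) : ℕ := N + 1 + 4^(k+1)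

lemma nat_lt_pow (k : ℕ) : k < 4^k := Nat.lt_pow_self (by norm_num : 1 < 4)

lemma ns_ge (N k : ℕ) : k ≤ ns N k := by
  have := nat_lt_pow k
  have : 4^k ≤ 4^(k+1) := Nat.pow_le_pow_right (by norm_num) (by omega)
  unfold ns; omega

lemma pow4_add (k j : ℕ) : 4^(k+1) + j ≤ 4^(k+j+1) := by
  induction j with
  | zero => simp
  | succ j ih =>
    have h : 4^(k+j+1) < 4^(k+j+2) := Nat.pow_lt_pow_right (by norm_num) (by omega)
    have e : k + (j+1) + 1 = k + j + 2 := by omega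
    rw [e]; omega

lemma ns_add_le (N k j : ℕ) : ns N k + j ≤ ns N (k + j) := by
  have := pow4_add k j
  unfold ns; omega

lemma ns_gap (N k : ℕ) : ns N k + 2*k + 4 ≤ ns N (k+1) := by
  have h1 : k + 1 ≤ 4^k := nat_lt_pow k
  have h2 : 4^(k+2) = 4 * (4 * 4^k) := by ring
  have h3 : 4^(k+1) = 4 * 4^k := by ring
  unfold ns; omega

/-- target: far point from `phi (2^n a)` -/
noncomputable def tgt (a : ℝ) (n : ℕ) : ℝ := if phi (2^n * a) ≤ 1/2 then 1 else 0

/-- partial sums of the constructed point -/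
noncomputable def S (a r : ℝ) (N : ℕ) : ℕ → ℝ
  | 0 => a + r
  | (k+1) => S a r N k +
      (qsel (2^(ns N k) * S a r N k - tgt a (ns N k)) k : ℝ) / 2^(ns N k + k)

lemma Sd_nonneg (a r : ℝ) (N k : ℕ) : 0 ≤ S a r N (k+1) - S a r N k := by
  rw [S]
  have h1 : (0:ℤ) ≤ qsel (2^(ns N k) * S a r N k - tgt a (ns N k)) k := qsel_nonneg _ _
  have h2 : (0:ℝ) ≤ (qsel (2^(ns N k) * S a r N k - tgt a (ns N k)) k : ℝ) := by exact_mod_cast h1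
  have h3 : (0:ℝ) < 2^(ns N k + k) := by positivity
  have := div_nonneg h2 (le_of_lt h3)
  linarith

lemma Sd_le (a r : ℝ) (N k : ℕ) : S a r N (k+1) - S a r N k ≤ 2 * (1/2)^(ns N k) := by
  rw [S]
  have h1 : qsel (2^(ns N k) * S a r N k - tgt a (ns N k)) k < 2^(k+1) := qsel_lt _ _
  have h2 : (qsel (2^(ns N k) * S a r N k - tgt a (ns N k)) k : ℝ) ≤ 2^(k+1) := by
    exact_mod_cast le_of_lt h1
  have h3 : (0:ℝ) < 2^(ns N k + k) := by positivity
  have h4 : ((qsel (2^(ns N k) * S a r N k - tgt a (ns N k)) k : ℝ)) / 2^(ns N k + k)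
      ≤ 2^(k+1) / 2^(ns N k + k) := by gcongr
  have h5 : (2:ℝ)^(k+1) / 2^(ns N k + k) = 2 * (1/2)^(ns N k) := by
    rw [one_half_pow, pow_add, pow_succ]
    field_simp
    ring
  linarith [h4, h5 ▸ h4]

lemma Sd_summable (a r : ℝ) (N : ℕ) :
    Summable (fun k => S a r N (k+1) - S a r N k) := by
  have hgeo : Summable (fun k : ℕ => 2 * ((1:ℝ)/2)^k) :=
    (summable_geometric_of_lt_one (by norm_num) (by norm_num)).mul_left 2
  apply Summable.of_nonneg_of_le (fun k => Sd_nonneg a r N k) ?_ hgeo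
  intro k
  refine (Sd_le a r N k).trans ?_
  have h := pow_le_pow_of_le_one (by norm_num : (0:ℝ) ≤ 1/2) (by norm_num) (ns_ge N k)
  linarith
/-! ### the constructed point -/

noncomputable def bb (a r : ℝ) (N : ℕ) : ℝ :=
  a + r + ∑' k, (S a r N (k+1) - S a r N k)

lemma S_eq (a r : ℝ) (N k : ℕ) :
    S a r N k = a + r + ∑ j ∈ Finset.range k, (S a r N (j+1) - S a r N j) := by
  rw [Finset.sum_range_sub (f := S a r N)]
  simp [S]

lemma bb_sub_S (a r : ℝ) (N k : ℕ) :
    bb a r N - S a r N k = ∑' j, (S a r N (j+k+1) - S a r N (j+k)) := by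
  have h := Summable.sum_add_tsum_nat_add (f := fun j => S a r N (j+1) - S a r N j) k
    (Sd_summable a r N)
  rw [bb, S_eq a r N k]
  have : ∀ j, S a r N (j + k + 1) - S a r N (j + k) = S a r N ((j+k)+1) - S a r N (j+k) :=
    fun j => rfl
  linarith [h]

lemma tail_summable (a r : ℝ) (N k : ℕ) :
    Summable (fun j => S a r N (j+k+1) - S a r N (j+k)) := by
  have := (Sd_summable a r N).comp_injective (add_left_injective k)
  simpa [Function.comp_def] using this

lemma tail_nonneg (a r : ℝ) (N k : ℕ) : 0 ≤ bb a r N - S a r N k := by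
  rw [bb_sub_S]
  exact tsum_nonneg (fun j => Sd_nonneg a r N (j+k))

lemma pow2_mul_le {m n k : ℕ} (h : m + k ≤ n) : (2:ℝ)^m * (1/2)^n ≤ (1/2)^k := by
  obtain ⟨d, rfl⟩ : ∃ d, n = m + d := ⟨n - m, by omega⟩
  have hkd : k ≤ d := by omega
  have h1 : ((1:ℝ)/2)^(m+d) = (1/2)^m * (1/2)^d := pow_add _ _ _
  have h2 : (2:ℝ)^m * (1/2)^m = 1 := by
    rw [← mul_pow]; norm_num
  have h3 : ((1:ℝ)/2)^d ≤ (1/2)^k := pow_le_pow_of_le_one (by norm_num) (by norm_num) hkd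
  rw [h1]
  calc (2:ℝ)^m * ((1/2)^m * (1/2)^d) = (2^m * (1/2)^m) * (1/2)^d := by ring
  _ = (1/2)^d := by rw [h2, one_mul]
  _ ≤ (1/2)^k := h3

lemma tail_le (a r : ℝ) (N k : ℕ) :
    bb a r N - S a r N k ≤ 4 * (1/2)^(ns N k) := by
  rw [bb_sub_S]
  have hle : ∀ j, S a r N (j+k+1) - S a r N (j+k) ≤ 2 * (1/2)^(ns N k) * (1/2)^j := by
    intro j
    refine (Sd_le a r N (j+k)).trans ?_
    have h1 : ns N k + j ≤ ns N (j + k) := by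
      have := ns_add_le N k j
      rw [Nat.add_comm j k]; exact this
    have h2 : ((1:ℝ)/2)^(ns N (j+k)) ≤ (1/2)^(ns N k + j) :=
      pow_le_pow_of_le_one (by norm_num) (by norm_num) h1
    rw [pow_add] at h2
    linarith
  have hsum2 : Summable (fun j : ℕ => 2 * ((1:ℝ)/2)^(ns N k) * (1/2)^j) :=
    (summable_geometric_of_lt_one (by norm_num) (by norm_num)).mul_left _
  calc ∑' j, (S a r N (j+k+1) - S a r N (j+k))
      ≤ ∑' j, 2 * ((1:ℝ)/2)^(ns N k) * (1/2)^j :=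
        Summable.tsum_le_tsum hle (tail_summable a r N k) hsum2
  _ = 2 * ((1:ℝ)/2)^(ns N k) * ∑' j, ((1:ℝ)/2)^j := tsum_mul_left
  _ = 2 * ((1:ℝ)/2)^(ns N k) * 2 := by
        rw [tsum_geometric_of_lt_one (by norm_num) (by norm_num)]; norm_num
  _ = 4 * (1/2)^(ns N k) := by ring
/-! ### evenness of the constructed digits -/

lemma pow_div_even (q : ℤ) (t m : ℕ) (h : t < m) :
    ∃ z : ℤ, (2:ℝ)^m * ((q:ℝ) / 2^t) = 2 * (z:ℝ) := by
  obtain ⟨d, rfl⟩ : ∃ d, m = t + 1 + d := ⟨m - t - 1, by omega⟩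
  refine ⟨q * 2^d, ?_⟩
  have h2 : (2:ℝ)^t ≠ 0 := by positivity
  push_cast
  rw [pow_add, pow_add]
  field_simp

lemma S_even (a r : ℝ) (N : ℕ)
    (hr : ∀ n : ℕ, N < n → ∃ z : ℤ, (2:ℝ)^n * r = 2 * (z:ℝ)) :
    ∀ k m : ℕ, ns N k + k < m → ∃ z : ℤ, (2:ℝ)^m * (S a r N (k+1) - a) = 2 * (z:ℝ) := by
  intro k
  induction k with
  | zero =>
    intro m hm
    have hN : N < m := by have := ns_ge N 0; unfold ns at hm; omega
    obtain ⟨z1, hz1⟩ := hr m hN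
    obtain ⟨z2, hz2⟩ := pow_div_even (qsel (2^(ns N 0) * S a r N 0 - tgt a (ns N 0)) 0)
      (ns N 0 + 0) m (by omega)
    refine ⟨z1 + z2, ?_⟩
    rw [show S a r N 1 - a = r + (qsel (2^(ns N 0) * S a r N 0 - tgt a (ns N 0)) 0 : ℝ) / 2^(ns N 0 + 0) by rw [S]; simp [S]; ring]
    push_cast
    rw [mul_add, hz1, hz2]; ring
  | succ k ih =>
    intro m hm
    have hlt : ns N k + k < m := by
      have h1 := ns_add_le N k 1
      omega
    obtain ⟨z1, hz1⟩ := ih m hlt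
    obtain ⟨z2, hz2⟩ := pow_div_even
      (qsel (2^(ns N (k+1)) * S a r N (k+1) - tgt a (ns N (k+1))) (k+1))
      (ns N (k+1) + (k+1)) m (by omega)
    refine ⟨z1 + z2, ?_⟩
    rw [show S a r N (k+2) - a = (S a r N (k+1) - a) +
      (qsel (2^(ns N (k+1)) * S a r N (k+1) - tgt a (ns N (k+1))) (k+1) : ℝ) / 2^(ns N (k+1) + (k+1)) by rw [S]; ring]
    push_cast
    rw [mul_add, hz1, hz2]; ring

/-! ### episode estimate -/

lemma tgt_mem (a : ℝ) (n : ℕ) : tgt a n = 0 ∨ tgt a n = 1 := by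
  rw [tgt]; split_ifs <;> simp

lemma episode (a r : ℝ) (N k : ℕ) :
    phi (2^(ns N k) * bb a r N - tgt a (ns N k)) ≤ 2 * (1/2)^k := by
  have hS : S a r N (k+1) = S a r N k +
      (qsel (2^(ns N k) * S a r N k - tgt a (ns N k)) k : ℝ) / 2^(ns N k + k) := by
    rw [S]
  set n := ns N k with hn
  set θ := 2^n * S a r N k - tgt a n with hθ
  have hne : (2:ℝ)^(n+k) ≠ 0 := by positivity
  have e1 : (2:ℝ)^n * ((qsel θ k : ℝ) / 2^(n+k)) = (qsel θ k : ℝ) / 2^k := by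
    rw [pow_add]; field_simp
  have hsplit : 2^n * bb a r N - tgt a n =
      (θ + (qsel θ k : ℝ) / 2^k) + 2^n * (bb a r N - S a r N (k+1)) := by
    rw [hS, ← e1, hθ]; ring
  have hq2 : ((1:ℝ)/2)^(k+2) * 4 = (1/2)^k := by
    rw [pow_add]; norm_num; ring
  calc phi (2^n * bb a r N - tgt a n)
      ≤ phi (θ + (qsel θ k : ℝ) / 2^k) + phi (2^n * (bb a r N - S a r N (k+1))) := by
        rw [hsplit]; exact phi_add_le _ _
  _ ≤ (1/2)^k + (1/2)^k := by
      gcongr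
      · exact phi_qsel θ k
      · refine (phi_le_abs _).trans ?_
        have h0 := tail_nonneg a r N (k+1)
        have h1 := tail_le a r N (k+1)
        have h2 : (0:ℝ) ≤ 2^n := by positivity
        rw [abs_of_nonneg (mul_nonneg h2 h0)]
        have h3 : (2:ℝ)^n * (bb a r N - S a r N (k+1)) ≤ 2^n * (4*(1/2)^(ns N (k+1))) :=
          mul_le_mul_of_nonneg_left h1 h2
        have h4 : n + (k+2) ≤ ns N (k+1) := by
          have := ns_gap N k; omega
        have h5 : (2:ℝ)^n * (1/2)^(ns N (k+1)) ≤ (1/2)^(k+2) := pow2_mul_le h4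
        calc (2:ℝ)^n * (bb a r N - S a r N (k+1)) ≤ 2^n * (4*(1/2)^(ns N (k+1))) := h3
        _ = (2^n * (1/2)^(ns N (k+1))) * 4 := by ring
        _ ≤ (1/2)^(k+2) * 4 := by linarith
        _ = (1/2)^k := hq2
  _ = 2 * (1/2)^k := by ring
/-! ### tracking estimate -/

lemma track (a r : ℝ) (N : ℕ)
    (hr : ∀ n : ℕ, N < n → ∃ z : ℤ, (2:ℝ)^n * r = 2 * (z:ℝ)) (k : ℕ) :
    phi (2^(ns N (k+1) - (k+2)) * (bb a r N - a)) ≤ (1/2)^k := by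
  set m := ns N (k+1) - (k+2) with hm
  have hgap := ns_gap N k
  have hge := ns_ge N k
  have hmk : ns N k + k < m := by omega
  have hmeq : m + (k + 2) = ns N (k+1) := by omega
  obtain ⟨z, hz⟩ := S_even a r N hr k m hmk
  have hsplit : 2^m * (bb a r N - a) =
      2^m * (bb a r N - S a r N (k+1)) + 2 * (z:ℝ) := by
    rw [← hz]; ring
  rw [hsplit, phi_add_int_mul_two]
  refine (phi_le_abs _).trans ?_
  have h0 := tail_nonneg a r N (k+1)
  have h1 := tail_le a r N (k+1)
  have h2 : (0:ℝ) ≤ 2^m := by positivity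
  rw [abs_of_nonneg (mul_nonneg h2 h0)]
  have h5 : (2:ℝ)^m * (1/2)^(ns N (k+1)) ≤ (1/2)^(k+2) := pow2_mul_le (le_of_eq hmeq)
  have hq2 : ((1:ℝ)/2)^(k+2) * 4 = (1/2)^k := by rw [pow_add]; norm_num; ring
  calc (2:ℝ)^m * (bb a r N - S a r N (k+1)) ≤ 2^m * (4*(1/2)^(ns N (k+1))) :=
        mul_le_mul_of_nonneg_left h1 h2
  _ = (2^m * (1/2)^(ns N (k+1))) * 4 := by ring
  _ ≤ (1/2)^(k+2) * 4 := by linarith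
  _ = (1/2)^k := hq2

/-! ### the two distance estimates -/

lemma episode_dist (a r : ℝ) (N k : ℕ) :
    1/2 - 2*(1/2)^k ≤ |phi (2^(ns N k) * a) - phi (2^(ns N k) * bb a r N)| := by
  set n := ns N k
  have htgt : phi (tgt a n) = tgt a n := by
    rcases tgt_mem a n with h | h <;> rw [h] <;>
      [exact phi_eq_self le_rfl (by norm_num); exact phi_eq_self (by norm_num) le_rfl]
  have h1 : |phi (2^n * bb a r N) - tgt a n| ≤ 2*(1/2)^k := by
    calc |phi (2^n * bb a r N) - tgt a n| = |phi (2^n * bb a r N) - phi (tgt a n)| := by rw [htgt]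
    _ ≤ phi (2^n * bb a r N - tgt a n) := abs_phi_sub_phi _ _
    _ ≤ 2*(1/2)^k := episode a r N k
  have h2 : 1/2 ≤ |phi (2^n * a) - tgt a n| := by
    rw [tgt]
    split_ifs with h
    · rw [abs_sub_comm, abs_of_nonneg (by linarith [phi_le_one (2^n * a)])]
      linarith [phi_le_one (2^n*a)]
    · push_neg at h
      rw [abs_of_nonneg (by linarith [phi_nonneg (2^n * a)])]
      linarith [phi_nonneg (2^n*a)]
  calc 1/2 - 2*(1/2)^k ≤ |phi (2^n * a) - tgt a n| - |phi (2^n * bb a r N) - tgt a n| := by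
        linarith
  _ ≤ |phi (2^n * a) - phi (2^n * bb a r N)| := by
      have := abs_sub_abs_le_abs_sub (phi (2^n * a) - tgt a n) (phi (2^n * bb a r N) - tgt a n)
      have e : (phi (2^n * a) - tgt a n) - (phi (2^n * bb a r N) - tgt a n)
          = phi (2^n * a) - phi (2^n * bb a r N) := by ring
      rw [e] at this
      linarith

lemma track_dist (a r : ℝ) (N : ℕ)
    (hr : ∀ n : ℕ, N < n → ∃ z : ℤ, (2:ℝ)^n * r = 2 * (z:ℝ)) (k : ℕ) :
    |phi (2^(ns N (k+1) - (k+2)) * a) - phi (2^(ns N (k+1) - (k+2)) * bb a r N)| ≤ (1/2)^k := by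
  set m := ns N (k+1) - (k+2)
  calc |phi (2^m * a) - phi (2^m * bb a r N)| ≤ phi (2^m * a - 2^m * bb a r N) :=
        abs_phi_sub_phi _ _
  _ = phi (2^m * (bb a r N - a)) := by
      rw [← phi_neg]; ring_nf
  _ ≤ (1/2)^k := track a r N hr k
/-! ### the main construction lemma -/

lemma main_exists (a u v : ℝ) (huv : u < v) :
    ∃ b, u ≤ b ∧ b ≤ v ∧
      (∀ ε > 0, ∀ M : ℕ, ∃ n, M ≤ n ∧ 1/2 - ε ≤ |phi (2^n * a) - phi (2^n * b)|) ∧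
      (∀ ε > 0, ∀ M : ℕ, ∃ n, M ≤ n ∧ |phi (2^n * a) - phi (2^n * b)| ≤ ε) := by
  obtain ⟨N, hN⟩ := pow_unbounded_of_one_lt (2/(v-u)) (one_lt_two : (1:ℝ) < 2)
  have hvu : 0 < v - u := by linarith
  have h2N : (0:ℝ) < 2^N := by positivity
  have hNbound : 2 * ((1:ℝ)/2)^N < v - u := by
    rw [one_half_pow]
    rw [div_lt_iff₀ hvu] at hN
    have e : (2:ℝ)*(1/2^N) = 2/2^N := by ring
    rw [e, div_lt_iff₀ h2N]
    nlinarith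
  set p : ℤ := ⌈(u - a) * 2^N⌉ with hp
  set r : ℝ := (p:ℝ) / 2^N with hrdef
  have hr : ∀ n : ℕ, N < n → ∃ z : ℤ, (2:ℝ)^n * r = 2 * (z:ℝ) := by
    intro n hn
    exact pow_div_even p N n hn
  have hur : u ≤ a + r := by
    have h := Int.le_ceil ((u - a) * 2^N)
    have h2 : (u - a) ≤ (p:ℝ)/2^N := by
      rw [le_div_iff₀ h2N, hp]; exact_mod_cast h
    rw [hrdef]; linarith
  have hru : a + r < u + (1/2)^N := by
    have h := Int.ceil_lt_add_one ((u - a) * 2^N)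
    have h2 : (p:ℝ)/2^N < (u - a) + 1/2^N := by
      rw [div_lt_iff₀ h2N]
      have e2 : ((u - a) + 1/2^N) * 2^N = (u-a)*2^N + 1 := by field_simp
      rw [e2, hp]; exact_mod_cast h
    rw [hrdef, one_half_pow]; linarith
  have htail0 : bb a r N - S a r N 0 ≤ 4 * (1/2)^(ns N 0) := tail_le a r N 0
  have htail0' : 0 ≤ bb a r N - S a r N 0 := tail_nonneg a r N 0
  have hS0 : S a r N 0 = a + r := rfl
  have hns0 : 4 * ((1:ℝ)/2)^(ns N 0) ≤ (1/2)^N := by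
    have : ns N 0 = N + 5 := by unfold ns; norm_num
    rw [this, pow_add]
    have h := pow_pos (show (0:ℝ) < 1/2 by norm_num) N
    nlinarith
  refine ⟨bb a r N, ?_, ?_, ?_, ?_⟩
  · rw [hS0] at htail0'; linarith
  · rw [hS0] at htail0; linarith
  · intro ε hε M
    obtain ⟨k0, hk0⟩ := exists_pow_lt_of_lt_one (show (0:ℝ) < ε/2 by linarith)
      (show (1:ℝ)/2 < 1 by norm_num)
    set k := max M k0 with hk
    refine ⟨ns N k, le_trans (le_max_left M k0) (ns_ge N k), ?_⟩
    have hkk : ((1:ℝ)/2)^k ≤ (1/2)^k0 :=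
      pow_le_pow_of_le_one (by norm_num) (by norm_num) (le_max_right M k0)
    have := episode_dist a r N k
    linarith
  · intro ε hε M
    obtain ⟨k0, hk0⟩ := exists_pow_lt_of_lt_one hε (show (1:ℝ)/2 < 1 by norm_num)
    set k := max M k0 with hk
    have hgap := ns_gap N k
    have hge := ns_ge N k
    refine ⟨ns N (k+1) - (k+2), by omega, ?_⟩
    have hkk : ((1:ℝ)/2)^k ≤ (1/2)^k0 :=
      pow_le_pow_of_le_one (by norm_num) (by norm_num) (le_max_right M k0)
    have := track_dist a r N hr k
    linarith
/-! ### geometric reduction -/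

lemma interval_in_V {U : Set ℝ} (hU : IsOpen U) {y0 : ℝ}
    (hy0 : y0 ∈ Set.Icc (-(1/2) : ℝ) 1 ∩ U) :
    ∃ α β : ℝ, α < β ∧ Set.Icc α β ⊆ Set.Icc (-(1/2) : ℝ) 1 ∩ U := by
  obtain ⟨⟨hy1, hy2⟩, hyU⟩ := hy0
  obtain ⟨ε, hε, hball⟩ := Metric.isOpen_iff.mp hU y0 hyU
  refine ⟨max (y0 - ε/2) (-(1/2)), min (y0 + ε/2) 1, ?_, ?_⟩
  · apply max_lt <;> apply lt_min <;> linarith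
  · intro t ⟨ht1, ht2⟩
    have h1 : -(1/2) ≤ t := le_trans (le_max_right _ _) ht1
    have h2 : t ≤ 1 := le_trans ht2 (min_le_right _ _)
    have h3 : y0 - ε/2 ≤ t := le_trans (le_max_left _ _) ht1
    have h4 : t ≤ y0 + ε/2 := le_trans ht2 (min_le_left _ _)
    refine ⟨⟨h1, h2⟩, hball ?_⟩
    rw [Metric.mem_ball, Real.dist_eq, abs_lt]
    constructor <;> linarith

lemma image_interval {α β : ℝ} (hαβ : α < β)
    (hsub : Set.Icc α β ⊆ Set.Icc (-(1/2) : ℝ) 1) :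
    ∃ u v : ℝ, u < v ∧ ∀ b, u ≤ b → b ≤ v → ∃ y, y ∈ Set.Icc α β ∧ hMap y = b := by
  have hα : -(1/2) ≤ α := (hsub ⟨le_rfl, le_of_lt hαβ⟩).1
  have hβ : β ≤ 1 := (hsub ⟨le_of_lt hαβ, le_rfl⟩).2
  rcases le_or_gt β 0 with h0 | h0
  · refine ⟨-β, -α, by linarith, fun b hb1 hb2 => ⟨-b, ⟨by linarith, by linarith⟩, ?_⟩⟩
    rw [hMap, if_pos (by linarith)]; ring
  · rcases le_or_gt β (1/2) with h12 | h12
    · set α₂ := max α 0 with hα₂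
      have hα₂0 : 0 ≤ α₂ := le_max_right _ _
      have hα₂β : α₂ < β := max_lt hαβ h0
      refine ⟨2*α₂, 2*β, by linarith, fun b hb1 hb2 => ⟨b/2, ⟨?_, by linarith⟩, ?_⟩⟩
      · have : α ≤ α₂ := le_max_left _ _
        linarith
      · rw [hMap_of_mem (by linarith) (by linarith), abs_of_nonpos (by linarith)]
        ring
    · set γ := max α (1/2) with hγ
      have hγβ : γ < β := max_lt hαβ h12
      have hγ2 : 1/2 ≤ γ := le_max_right _ _
      refine ⟨2 - 2*β, 2 - 2*γ, by linarith, fun b hb1 hb2 => ⟨1 - b/2, ⟨?_, ?_⟩, ?_⟩⟩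
      · have : α ≤ γ := le_max_left _ _
        linarith
      · linarith
      · rw [hMap_of_mem (by linarith) (by linarith), abs_of_nonneg (by linarith)]
        ring

/-- `h` is chaotic on `[-1/2,1]`: there exists `δ > 0` such that for every
`x ∈ [-1/2,1]` and every nonempty (relatively) open subset `V` of `[-1/2,1]`
there is `y ∈ V` with `limsup |hⁿx - hⁿy| ≥ δ` and `liminf |hⁿx - hⁿy| = 0`. -/
theorem hMap_chaotic :
    ∃ δ : ℝ, 0 < δ ∧
      ∀ x ∈ Set.Icc (-(1 / 2) : ℝ) 1, ∀ V : Set ℝ, V ⊆ Set.Icc (-(1 / 2) : ℝ) 1 →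
        (∃ U : Set ℝ, IsOpen U ∧ V = Set.Icc (-(1 / 2) : ℝ) 1 ∩ U) → V.Nonempty →
        ∃ y ∈ V,
          δ ≤ limsup (fun n => |hMap^[n] x - hMap^[n] y|) atTop ∧
          liminf (fun n => |hMap^[n] x - hMap^[n] y|) atTop = 0 := by
  refine ⟨1/2, by norm_num, ?_⟩
  rintro x hx V hVsub ⟨U, hU, rfl⟩ ⟨y0, hy0⟩
  obtain ⟨α, β, hαβ, hsub⟩ := interval_in_V hU hy0
  obtain ⟨u, v, huv, hinv⟩ := image_interval hαβ (hsub.trans Set.inter_subset_left)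
  set a := hMap x with ha_def
  have ha : hMap x ∈ Set.Icc (0:ℝ) 1 := hMap_mem_Icc hx
  obtain ⟨b, hub, hbv, hfar, hnear⟩ := main_exists a u v huv
  obtain ⟨y, hy, hyb⟩ := hinv b hub hbv
  have hyIcc : y ∈ Set.Icc (-(1/2) : ℝ) 1 := (hsub hy).1
  have hb : b ∈ Set.Icc (0:ℝ) 1 := hyb ▸ hMap_mem_Icc hyIcc
  refine ⟨y, hsub hy, ?_, ?_⟩
  · -- limsup
    set f : ℕ → ℝ := fun n => |hMap^[n] x - hMap^[n] y| with hf
    have hiter : ∀ n, f (n+1) = |phi (2^n * a) - phi (2^n * b)| := by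
      intro n
      simp only [hf]
      rw [Function.iterate_succ_apply, Function.iterate_succ_apply, ← ha_def,
        hMap_iterate_eq_phi ha.1 ha.2 n, hyb, hMap_iterate_eq_phi hb.1 hb.2 n]
    have hbound : ∀ n, f n ≤ 3/2 := by
      intro n
      cases n with
      | zero =>
        simp only [hf, Function.iterate_zero_apply]
        obtain ⟨hx1, hx2⟩ := hx
        obtain ⟨hy1, hy2⟩ := hyIcc
        rw [abs_le]; constructor <;> linarith
      | succ n =>
        rw [hiter n, abs_le]
        have := phi_nonneg (2^n * a); have := phi_le_one (2^n * a)
        have := phi_nonneg (2^n * b); have := phi_le_one (2^n * b)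
        constructor <;> linarith
    have hbdd : IsBoundedUnder (· ≤ ·) atTop f := isBoundedUnder_of ⟨3/2, hbound⟩
    apply le_of_forall_sub_le
    intro ε hε
    refine le_limsup_of_frequently_le ?_ hbdd
    rw [frequently_atTop]
    intro M
    obtain ⟨n, hn, hle⟩ := hfar ε hε M
    exact ⟨n+1, by omega, by rw [hiter n]; exact hle⟩
  · -- liminf
    set f : ℕ → ℝ := fun n => |hMap^[n] x - hMap^[n] y| with hf
    have hiter : ∀ n, f (n+1) = |phi (2^n * a) - phi (2^n * b)| := by
      intro n
      simp only [hf]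
      rw [Function.iterate_succ_apply, Function.iterate_succ_apply, ← ha_def,
        hMap_iterate_eq_phi ha.1 ha.2 n, hyb, hMap_iterate_eq_phi hb.1 hb.2 n]
    have hnn : ∀ n, 0 ≤ f n := fun n => abs_nonneg _
    have hbdd_ge : IsBoundedUnder (· ≥ ·) atTop f := isBoundedUnder_of ⟨0, hnn⟩
    have hbound : ∀ n, f n ≤ 3/2 := by
      intro n
      cases n with
      | zero =>
        simp only [hf, Function.iterate_zero_apply]
        obtain ⟨hx1, hx2⟩ := hx
        obtain ⟨hy1, hy2⟩ := hyIcc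
        rw [abs_le]; constructor <;> linarith
      | succ n =>
        rw [hiter n, abs_le]
        have := phi_nonneg (2^n * a); have := phi_le_one (2^n * a)
        have := phi_nonneg (2^n * b); have := phi_le_one (2^n * b)
        constructor <;> linarith
    have hbdd : IsBoundedUnder (· ≤ ·) atTop f := isBoundedUnder_of ⟨3/2, hbound⟩
    refine le_antisymm ?_ ?_
    · by_contra h
      push_neg at h
      have hh : liminf f atTop ≤ liminf f atTop / 2 := by
        refine liminf_le_of_frequently_le ?_ hbdd_ge
        rw [frequently_atTop]
        intro M
        obtain ⟨n, hn, hle⟩ := hnear (liminf f atTop / 2) (by linarith) M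
        exact ⟨n+1, by omega, by rw [hiter n]; exact hle⟩
      linarith
    · exact le_liminf_of_le (hbdd.isCoboundedUnder_ge)
        (Eventually.of_forall hnn)
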